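/- There is a bijection between the set M_{n,k} of sets of k minimal rooted labeled trees whose vertex sets form a set partition of [n], and the set T'_{n,k} of rooted labeled non-planar trees on [n] whose maximal decreasing subtree is a chain with k vertices. -/
import Mathlib


/- We encode rooted labeled trees (and forests of such trees) on the vertex set
`[n]` by their parent function `f : Fin n → Fin n`: `f v` is the parent of `v`,
and roots are the fixed points.  Such a function corresponds to a forest of
rooted trees exactly when it is acyclic (every vertex reaches a fixed point
under iteration); a single rooted tree corresponds to exactly one fixed point. -/

/-- `v` belongs to the maximal decreasing subtree `MD(T)` of the tree with parent
function `f`: along the path from `v` to the root every (non-trivial) step goes to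
a vertex with a larger label. -/
def InMD {n : ℕ} (f : Fin n → Fin n) (v : Fin n) : Prop :=
  ∀ m, f^[m + 1] v ≠ f^[m] v → f^[m] v < f^[m + 1] v

attribute [local instance] Classical.propDecidable

namespace MDAux

variable {n : ℕ}

/-- downward strong induction on `Fin n` -/
lemma downward_induction {P : Fin n → Prop}
    (H : ∀ v, (∀ u, v < u → P u) → P v) : ∀ v, P v := by
  have key : ∀ d (v : Fin n), n - v.val ≤ d → P v := by
    intro d
    induction d with
    | zero => intro v hv; exact absurd hv (by have := v.isLt; omega)
    | succ d IH =>
      intro v _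
      exact H v fun u hu => IH u (by have := u.isLt; have : v.val < u.val := hu; omega)
  intro v; exact key n v (by omega)

lemma inMD_of_fixed {g : Fin n → Fin n} {v : Fin n} (h : g v = v) : InMD g v := by
  intro m hm
  exact absurd (by simp [Function.iterate_fixed h]) hm

lemma inMD_apply {g : Fin n → Fin n} {v : Fin n} (h : InMD g v) : InMD g (g v) := by
  intro m
  have := h (m + 1)
  simpa [Function.iterate_succ_apply] using this

lemma lt_apply_of_inMD {g : Fin n → Fin n} {v : Fin n} (h : InMD g v) (hne : g v ≠ v) :
    v < g v := by
  have := h 0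
  simpa using this (by simpa using hne)

lemma le_apply_of_inMD {g : Fin n → Fin n} {v : Fin n} (h : InMD g v) : v ≤ g v := by
  rcases eq_or_ne (g v) v with h' | h'
  · exact le_of_eq h'.symm
  · exact (lt_apply_of_inMD h h').le

lemma inMD_of_apply {g : Fin n → Fin n} {v : Fin n} (h : InMD g (g v)) (hle : v ≤ g v) :
    InMD g v := by
  intro m
  cases m with
  | zero => intro hm; simpa using lt_of_le_of_ne hle (by simpa using hm.symm)
  | succ m =>
    intro hm
    have h1 : g^[m + 1 + 1] v = g^[m + 1] (g v) := by
      rw [Function.iterate_succ_apply]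
    have h2 : g^[m + 1] v = g^[m] (g v) := by rw [Function.iterate_succ_apply]
    rw [h1, h2] at hm ⊢
    exact h m hm

lemma iterate_inMD {g : Fin n → Fin n} {v : Fin n} (h : InMD g v) (m : ℕ) :
    InMD g (g^[m] v) := by
  induction m with
  | zero => exact h
  | succ m IH => rw [Function.iterate_succ_apply']; exact inMD_apply IH

lemma le_iterate_of_inMD {g : Fin n → Fin n} {v : Fin n} (h : InMD g v) (m : ℕ) :
    v ≤ g^[m] v := by
  induction m with
  | zero => exact le_rfl
  | succ m IH =>
    rw [Function.iterate_succ_apply']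
    exact IH.trans (le_apply_of_inMD (iterate_inMD h m))

end MDAux

namespace MDAux

variable {n : ℕ}

/-- fixed point set -/
def fixSet (f : Fin n → Fin n) : Finset (Fin n) := Finset.univ.filter (fun v => f v = v)

lemma mem_fixSet {f : Fin n → Fin n} {v : Fin n} : v ∈ fixSet f ↔ f v = v := by
  simp [fixSet]

/-- the forward map: link roots into a decreasing chain -/
noncomputable def fwd (f : Fin n → Fin n) : Fin n → Fin n := fun v =>
  if h : v ∈ fixSet f ∧ ((fixSet f).filter (fun u => v < u)).Nonempty
  then ((fixSet f).filter (fun u => v < u)).min' h.2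
  else f v

section Forward

variable {f : Fin n → Fin n}

lemma fwd_of_not_mem {v : Fin n} (hv : v ∉ fixSet f) : fwd f v = f v := by
  rw [fwd, dif_neg]; tauto

lemma fwd_of_max {v : Fin n} (hv : v ∈ fixSet f)
    (hm : ¬ ((fixSet f).filter (fun u => v < u)).Nonempty) : fwd f v = v := by
  rw [fwd, dif_neg, mem_fixSet.mp hv]; tauto

lemma fwd_of_mem {v : Fin n} (hv : v ∈ fixSet f)
    (hm : ((fixSet f).filter (fun u => v < u)).Nonempty) :
    fwd f v = ((fixSet f).filter (fun u => v < u)).min' hm := by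
  rw [fwd, dif_pos ⟨hv, hm⟩]

lemma fwd_mem_and_lt {v : Fin n} (hv : v ∈ fixSet f)
    (hm : ((fixSet f).filter (fun u => v < u)).Nonempty) :
    fwd f v ∈ fixSet f ∧ v < fwd f v := by
  have := Finset.min'_mem _ hm
  rw [Finset.mem_filter] at this
  rw [fwd_of_mem hv hm]
  exact ⟨this.1, this.2⟩

lemma fwd_maps_fix {v : Fin n} (hv : v ∈ fixSet f) : fwd f v ∈ fixSet f := by
  by_cases hm : ((fixSet f).filter (fun u => v < u)).Nonempty
  · exact (fwd_mem_and_lt hv hm).1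
  · rw [fwd_of_max hv hm]; exact hv

lemma le_fwd_of_fix {v : Fin n} (hv : v ∈ fixSet f) : v ≤ fwd f v := by
  by_cases hm : ((fixSet f).filter (fun u => v < u)).Nonempty
  · exact (fwd_mem_and_lt hv hm).2.le
  · rw [fwd_of_max hv hm]

lemma fwd_fixed_iff {v : Fin n} :
    fwd f v = v ↔ v ∈ fixSet f ∧ ¬ ((fixSet f).filter (fun u => v < u)).Nonempty := by
  constructor
  · intro h
    by_cases hv : v ∈ fixSet f
    · refine ⟨hv, fun hm => ?_⟩
      exact absurd h (by have := (fwd_mem_and_lt hv hm).2; exact this.ne')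
    · rw [fwd_of_not_mem hv] at h; exact absurd (mem_fixSet.mpr h) hv
  · rintro ⟨hv, hm⟩; exact fwd_of_max hv hm

lemma reaches_of_fix : ∀ v ∈ fixSet f, ∃ m, (fwd f)^[m + 1] v = (fwd f)^[m] v := by
  have := downward_induction
    (P := fun v => v ∈ fixSet f → ∃ m, (fwd f)^[m + 1] v = (fwd f)^[m] v) ?_
  · exact this
  intro v IH hv
  by_cases hm : ((fixSet f).filter (fun u => v < u)).Nonempty
  · obtain ⟨hmem, hlt⟩ := fwd_mem_and_lt hv hm
    obtain ⟨m, hm'⟩ := IH _ hlt hmem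
    exact ⟨m + 1, by simpa [Function.iterate_succ_apply] using hm'⟩
  · exact ⟨0, by simpa using fwd_of_max hv hm⟩

lemma fwd_reaches (hac : ∀ v, ∃ m, f^[m + 1] v = f^[m] v) :
    ∀ v, ∃ m, (fwd f)^[m + 1] v = (fwd f)^[m] v := by
  have hfix : ∀ v, ∃ m, f^[m] v ∈ fixSet f := by
    intro v
    obtain ⟨m, hm⟩ := hac v
    exact ⟨m, mem_fixSet.mpr (by rwa [Function.iterate_succ_apply'] at hm)⟩
  have key : ∀ m v, f^[m] v ∈ fixSet f → ∃ m', (fwd f)^[m' + 1] v = (fwd f)^[m'] v := by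
    intro m
    induction m with
    | zero => intro v hv; exact reaches_of_fix v hv
    | succ m IH =>
      intro v hv
      by_cases h : v ∈ fixSet f
      · exact reaches_of_fix v h
      · obtain ⟨m', hm'⟩ := IH (f v) (by rwa [Function.iterate_succ_apply] at hv)
        refine ⟨m' + 1, ?_⟩
        have h1 : ∀ k, (fwd f)^[k + 1] v = (fwd f)^[k] (f v) := fun k => by
          rw [Function.iterate_succ_apply, fwd_of_not_mem h]
        rw [h1, h1]
        exact hm'
  intro v
  obtain ⟨m, hm⟩ := hfix v
  exact key m v hm

end Forward

end MDAux

namespace MDAux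

variable {n : ℕ} {f : Fin n → Fin n}

lemma iterate_fwd_mem {v : Fin n} (hv : v ∈ fixSet f) (m : ℕ) :
    (fwd f)^[m] v ∈ fixSet f := by
  induction m with
  | zero => exact hv
  | succ m IH => rw [Function.iterate_succ_apply']; exact fwd_maps_fix IH

lemma inMD_fwd_of_fix {v : Fin n} (hv : v ∈ fixSet f) : InMD (fwd f) v := by
  intro m hm
  have h1 := iterate_fwd_mem hv m
  have h2 : (fwd f)^[m + 1] v = fwd f ((fwd f)^[m] v) := Function.iterate_succ_apply' _ _ _
  rw [h2] at hm ⊢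
  exact lt_of_le_of_ne (le_fwd_of_fix h1) (Ne.symm hm)

lemma not_inMD_fwd (hac : ∀ v, ∃ m, f^[m + 1] v = f^[m] v)
    (hmin : ∀ v, f v ≠ v → f (f v) = f v → f v < v)
    {v : Fin n} (hv : v ∉ fixSet f) : ¬ InMD (fwd f) v := by
  have hfix : ∃ m, f^[m] v ∈ fixSet f := by
    obtain ⟨m, hm⟩ := hac v
    exact ⟨m, mem_fixSet.mpr (by rwa [Function.iterate_succ_apply'] at hm)⟩
  classical
  let m0 := Nat.find hfix
  have hm0 : f^[m0] v ∈ fixSet f := Nat.find_spec hfix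
  have hlt : ∀ m < m0, f^[m] v ∉ fixSet f := fun m hm => Nat.find_min hfix hm
  have hm0pos : 0 < m0 := by
    rcases Nat.eq_zero_or_pos m0 with h | h
    · exact absurd (by rwa [h] at hm0) hv
    · exact h
  -- fwd agrees with f along the path up to m0
  have hagree : ∀ m ≤ m0, (fwd f)^[m] v = f^[m] v := by
    intro m hm
    induction m with
    | zero => rfl
    | succ m IH =>
      have hmlt : m < m0 := hm
      rw [Function.iterate_succ_apply', Function.iterate_succ_apply',
        IH hmlt.le, fwd_of_not_mem (hlt m hmlt)]
  intro hMD
  set w := f^[m0 - 1] v with hw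
  have hwn : w ∉ fixSet f := hlt _ (by omega)
  have hfw : f w = f^[m0] v := by
    have h := Function.iterate_succ_apply' f (m0 - 1) v
    rw [hw, ← h]
    congr 1; omega
  have hfww : f w ≠ w := fun h => hwn (mem_fixSet.mpr h)
  have hffw : f (f w) = f w := by rw [hfw]; exact mem_fixSet.mp hm0
  have hdec : f w < w := hmin w hfww hffw
  have := hMD (m0 - 1)
  rw [hagree (m0 - 1) (by omega)] at this
  have heq : (fwd f)^[m0 - 1 + 1] v = f w := by
    rw [hagree (m0 - 1 + 1) (by omega), hfw]
    congr 1; omega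
  rw [heq] at this
  exact absurd (this (by rwa [hw] at hfww)) (not_lt.mpr hdec.le)

lemma fwd_chain
    {u v : Fin n} (hu : u ∈ fixSet f) (hv : v ∈ fixSet f)
    (hnu : fwd f u ≠ u) (hnv : fwd f v ≠ v) (heq : fwd f u = fwd f v) : u = v := by
  have hmu : ((fixSet f).filter (fun w => u < w)).Nonempty := by
    by_contra h; exact hnu (fwd_of_max hu h)
  have hmv : ((fixSet f).filter (fun w => v < w)).Nonempty := by
    by_contra h; exact hnv (fwd_of_max hv h)
  by_contra hne
  rcases lt_or_gt_of_ne hne with h | h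
  · have h1 : fwd f u ≤ v := by
      rw [fwd_of_mem hu hmu]
      exact Finset.min'_le _ _ (Finset.mem_filter.mpr ⟨hv, h⟩)
    have h2 : v < fwd f v := (fwd_mem_and_lt hv hmv).2
    rw [heq] at h1; exact absurd h1 (not_le.mpr h2)
  · have h1 : fwd f v ≤ u := by
      rw [fwd_of_mem hv hmv]
      exact Finset.min'_le _ _ (Finset.mem_filter.mpr ⟨hu, h⟩)
    have h2 : u < fwd f u := (fwd_mem_and_lt hu hmu).2
    rw [← heq] at h1; exact absurd h1 (not_le.mpr h2)

lemma fwd_fix_card (hk : (fixSet f).Nonempty) :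
    (Finset.univ.filter (fun v => fwd f v = v)).card = 1 := by
  have : Finset.univ.filter (fun v => fwd f v = v) = {(fixSet f).max' hk} := by
    ext v
    simp only [Finset.mem_filter, Finset.mem_univ, true_and, Finset.mem_singleton]
    rw [fwd_fixed_iff]
    constructor
    · rintro ⟨hv, hm⟩
      refine le_antisymm (Finset.le_max' _ _ hv) ?_
      by_contra h
      exact hm ⟨_, Finset.mem_filter.mpr ⟨(fixSet f).max'_mem hk, not_le.mp h⟩⟩
    · rintro rfl
      refine ⟨(fixSet f).max'_mem hk, ?_⟩
      rintro ⟨u, hu⟩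
      rw [Finset.mem_filter] at hu
      exact absurd (Finset.le_max' _ _ hu.1) (not_le.mpr hu.2)
  rw [this, Finset.card_singleton]

end MDAux

namespace MDAux

variable {n : ℕ}

/-- backward map: cut the tree at every vertex of the maximal decreasing subtree -/
noncomputable def bwd (g : Fin n → Fin n) : Fin n → Fin n := fun v =>
  if InMD g v then v else g v

section Backward

variable {g : Fin n → Fin n}

lemma bwd_of_inMD {v : Fin n} (h : InMD g v) : bwd g v = v := if_pos h
lemma bwd_of_not_inMD {v : Fin n} (h : ¬ InMD g v) : bwd g v = g v := if_neg h

lemma fixed_inMD {v : Fin n} (h : g v = v) : InMD g v := inMD_of_fixed h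

lemma bwd_fixed_iff {v : Fin n} : bwd g v = v ↔ InMD g v := by
  constructor
  · intro h
    by_contra hv
    rw [bwd_of_not_inMD hv] at h
    exact hv (fixed_inMD h)
  · exact bwd_of_inMD

lemma bwd_reaches (hac : ∀ v, ∃ m, g^[m + 1] v = g^[m] v) :
    ∀ v, ∃ m, (bwd g)^[m + 1] v = (bwd g)^[m] v := by
  have hfix : ∀ v, ∃ m, InMD g (g^[m] v) := by
    intro v
    obtain ⟨m, hm⟩ := hac v
    rw [Function.iterate_succ_apply'] at hm
    exact ⟨m, fixed_inMD hm⟩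
  have key : ∀ m v, InMD g (g^[m] v) → ∃ m', (bwd g)^[m' + 1] v = (bwd g)^[m'] v := by
    intro m
    induction m with
    | zero => intro v hv; exact ⟨0, by simpa using bwd_of_inMD hv⟩
    | succ m IH =>
      intro v hv
      by_cases h : InMD g v
      · exact ⟨0, by simpa using bwd_of_inMD h⟩
      · obtain ⟨m', hm'⟩ := IH (g v) (by rwa [Function.iterate_succ_apply] at hv)
        refine ⟨m' + 1, ?_⟩
        have h1 : ∀ k, (bwd g)^[k + 1] v = (bwd g)^[k] (g v) := fun k => by
          rw [Function.iterate_succ_apply, bwd_of_not_inMD h]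
        rw [h1, h1]
        exact hm'
  intro v
  obtain ⟨m, hm⟩ := hfix v
  exact key m v hm

lemma bwd_min (hone : (Finset.univ.filter (fun v => g v = v)).card = 1) :
    ∀ v, bwd g v ≠ v → bwd g (bwd g v) = bwd g v → bwd g v < v := by
  intro v hne hfix
  have hv : ¬ InMD g v := fun h => hne (bwd_of_inMD h)
  rw [bwd_of_not_inMD hv] at hne hfix ⊢
  have hgv : InMD g (g v) := bwd_fixed_iff.mp hfix
  rcases lt_trichotomy (g v) v with h | h | h
  · exact h
  · exact absurd (fixed_inMD h) hv
  · exact absurd (inMD_of_apply hgv h.le) hv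

end Backward

end MDAux

namespace MDAux

variable {n : ℕ} {g : Fin n → Fin n}

lemma eq_root {r : Fin n} (hroot : Finset.univ.filter (fun v => g v = v) = {r})
    {w : Fin n} (hw : g w = w) : w = r := by
  have : w ∈ Finset.univ.filter (fun v => g v = v) := by simp [hw]
  rwa [hroot, Finset.mem_singleton] at this

lemma root_fixed {r : Fin n} (hroot : Finset.univ.filter (fun v => g v = v) = {r}) :
    g r = r := by
  have : r ∈ Finset.univ.filter (fun v => g v = v) := by rw [hroot]; simp
  simpa using this

lemma le_root (hac : ∀ v, ∃ m, g^[m + 1] v = g^[m] v)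
    {r : Fin n} (hroot : Finset.univ.filter (fun v => g v = v) = {r})
    {v : Fin n} (hv : InMD g v) : v ≤ r := by
  obtain ⟨m, hm⟩ := hac v
  rw [Function.iterate_succ_apply'] at hm
  have : g^[m] v = r := eq_root hroot hm
  rw [← this]
  exact le_iterate_of_inMD hv m

/-- the successor lemma: inside the decreasing chain, `g` jumps to the least
element of `MD` above. -/
lemma succ_lemma (hac : ∀ v, ∃ m, g^[m + 1] v = g^[m] v)
    {r : Fin n} (hroot : Finset.univ.filter (fun v => g v = v) = {r})
    (hchain : ∀ u v, InMD g u → InMD g v → g u ≠ u → g v ≠ v → g u = g v → u = v) :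
    ∀ v, InMD g v → g v ≠ v → ∀ u, InMD g u → v < u → g v ≤ u := by
  have main := downward_induction
    (P := fun v => InMD g v → g v ≠ v → ∀ u, InMD g u → v < u → g v ≤ u) ?_
  · exact main
  intro v IH hvMD hvne u huMD hvu
  by_contra hcon
  have hugv : u < g v := not_le.mp hcon
  have hgvMD : InMD g (g v) := inMD_apply hvMD
  have hgvr : g v ≤ r := le_root hac hroot hgvMD
  have sub : ∀ d (w : Fin n), InMD g w → v < w → w < g v → (g v).val ≤ w.val + d → False := by
    intro d
    induction d with
    | zero =>
      intro w _ _ hwgv hb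
      have : w.val < (g v).val := hwgv
      omega
    | succ d IH2 =>
      intro w hwMD hvw hwgv hb
      have hgwne : g w ≠ w := by
        intro h
        have : w = r := eq_root hroot h
        rw [this] at hwgv
        exact absurd hgvr (not_le.mpr hwgv)
      have hgwle : g w ≤ g v := IH w hvw hwMD hgwne (g v) hgvMD hwgv
      have hgwne' : g w ≠ g v := by
        intro h
        exact absurd (hchain v w hvMD hwMD hvne hgwne h.symm) hvw.ne
      have hgwlt : g w < g v := lt_of_le_of_ne hgwle hgwne'
      have hwgw : w < g w := lt_apply_of_inMD hwMD hgwne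
      refine IH2 (g w) (inMD_apply hwMD) (hvw.trans hwgw) hgwlt ?_
      have h1 : w.val < (g w).val := hwgw
      omega
  exact sub (g v).val u huMD hvu hugv (by omega)

end MDAux

namespace MDAux

variable {n : ℕ}

lemma inMD_fwd_iff {f : Fin n → Fin n}
    (hac : ∀ v, ∃ m, f^[m + 1] v = f^[m] v)
    (hmin : ∀ v, f v ≠ v → f (f v) = f v → f v < v) {v : Fin n} :
    InMD (fwd f) v ↔ v ∈ fixSet f := by
  constructor
  · intro h
    by_contra hv
    exact not_inMD_fwd hac hmin hv h
  · exact inMD_fwd_of_fix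

lemma fwd_injective {f₁ f₂ : Fin n → Fin n}
    (hac₁ : ∀ v, ∃ m, f₁^[m + 1] v = f₁^[m] v)
    (hmin₁ : ∀ v, f₁ v ≠ v → f₁ (f₁ v) = f₁ v → f₁ v < v)
    (hac₂ : ∀ v, ∃ m, f₂^[m + 1] v = f₂^[m] v)
    (hmin₂ : ∀ v, f₂ v ≠ v → f₂ (f₂ v) = f₂ v → f₂ v < v)
    (heq : fwd f₁ = fwd f₂) : f₁ = f₂ := by
  have hset : ∀ v, v ∈ fixSet f₁ ↔ v ∈ fixSet f₂ := by
    intro v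
    rw [← inMD_fwd_iff hac₁ hmin₁, ← inMD_fwd_iff hac₂ hmin₂, heq]
  funext v
  by_cases hv : v ∈ fixSet f₁
  · rw [mem_fixSet.mp hv, mem_fixSet.mp ((hset v).mp hv)]
  · rw [← fwd_of_not_mem hv, ← fwd_of_not_mem (fun h => hv ((hset v).mpr h)), heq]

lemma bwd_injective {g₁ g₂ : Fin n → Fin n}
    (hac₁ : ∀ v, ∃ m, g₁^[m + 1] v = g₁^[m] v)
    (hone₁ : (Finset.univ.filter (fun v => g₁ v = v)).card = 1)
    (hchain₁ : ∀ u v, InMD g₁ u → InMD g₁ v → g₁ u ≠ u → g₁ v ≠ v → g₁ u = g₁ v → u = v)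
    (hac₂ : ∀ v, ∃ m, g₂^[m + 1] v = g₂^[m] v)
    (hone₂ : (Finset.univ.filter (fun v => g₂ v = v)).card = 1)
    (hchain₂ : ∀ u v, InMD g₂ u → InMD g₂ v → g₂ u ≠ u → g₂ v ≠ v → g₂ u = g₂ v → u = v)
    (heq : bwd g₁ = bwd g₂) : g₁ = g₂ := by
  obtain ⟨r₁, hroot₁⟩ := Finset.card_eq_one.mp hone₁
  obtain ⟨r₂, hroot₂⟩ := Finset.card_eq_one.mp hone₂
  have hset : ∀ v, InMD g₁ v ↔ InMD g₂ v := by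
    intro v
    rw [← bwd_fixed_iff, ← bwd_fixed_iff, heq]
  -- the two roots coincide (both are the maximum of the common MD set)
  have hr1MD : InMD g₁ r₁ := fixed_inMD (root_fixed hroot₁)
  have hr2MD : InMD g₂ r₂ := fixed_inMD (root_fixed hroot₂)
  have hr : r₁ = r₂ :=
    le_antisymm (le_root hac₂ hroot₂ ((hset r₁).mp hr1MD))
      (le_root hac₁ hroot₁ ((hset r₂).mpr hr2MD))
  funext v
  by_cases hv : InMD g₁ v
  · by_cases hfix : g₁ v = v
    · have : v = r₁ := eq_root hroot₁ hfix
      rw [hfix, this, hr, root_fixed hroot₂]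
    · have hv₂ : InMD g₂ v := (hset v).mp hv
      have hfix₂ : g₂ v ≠ v := by
        intro h
        have : v = r₂ := eq_root hroot₂ h
        exact hfix (by rw [this, ← hr, root_fixed hroot₁])
      have h1MD : InMD g₁ (g₁ v) := inMD_apply hv
      have h2MD : InMD g₂ (g₂ v) := inMD_apply hv₂
      have hlt₁ : v < g₁ v := lt_apply_of_inMD hv hfix
      have hlt₂ : v < g₂ v := lt_apply_of_inMD hv₂ hfix₂
      exact le_antisymm
        (succ_lemma hac₁ hroot₁ hchain₁ v hv hfix (g₂ v) ((hset _).mpr h2MD) hlt₂)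
        (succ_lemma hac₂ hroot₂ hchain₂ v hv₂ hfix₂ (g₁ v) ((hset _).mp h1MD) hlt₁)
  · rw [← bwd_of_not_inMD hv, ← bwd_of_not_inMD (fun h => hv ((hset v).mpr h)), heq]

end MDAux

open MDAux

/-- Bijection between the set `M_{n,k}` of sets of `k` minimal rooted labeled trees
whose vertex sets form a set partition of `[n]` (encoded as acyclic parent functions
with `k` fixed points whose roots have no smaller-labeled children), and the set
`T'_{n,k}` of rooted labeled trees on `[n]` whose maximal decreasing subtree is a
chain with `k` vertices (encoded as acyclic parent functions with one fixed point,
whose maximal decreasing subtree has `k` vertices and is a path, i.e. every vertex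
of it has at most one child inside it). -/
theorem minimal_forests_equiv_chain_MD_trees (n k : ℕ) (hk : 1 ≤ k) (hkn : k ≤ n) :
    Nonempty
      ({f : Fin n → Fin n //
          (∀ v, ∃ m, f^[m + 1] v = f^[m] v) ∧
          (Finset.univ.filter (fun v => f v = v)).card = k ∧
          (∀ v, f v ≠ v → f (f v) = f v → f v < v)} ≃
        {f : Fin n → Fin n //
          (∀ v, ∃ m, f^[m + 1] v = f^[m] v) ∧
          (Finset.univ.filter (fun v => f v = v)).card = 1 ∧
          Nat.card {v : Fin n // InMD f v} = k ∧
          (∀ u v, InMD f u → InMD f v → f u ≠ u → f v ≠ v → f u = f v → u = v)}) := by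
  set A := {f : Fin n → Fin n //
          (∀ v, ∃ m, f^[m + 1] v = f^[m] v) ∧
          (Finset.univ.filter (fun v => f v = v)).card = k ∧
          (∀ v, f v ≠ v → f (f v) = f v → f v < v)} with hA
  set B := {f : Fin n → Fin n //
          (∀ v, ∃ m, f^[m + 1] v = f^[m] v) ∧
          (Finset.univ.filter (fun v => f v = v)).card = 1 ∧
          Nat.card {v : Fin n // InMD f v} = k ∧
          (∀ u v, InMD f u → InMD f v → f u ≠ u → f v ≠ v → f u = f v → u = v)} with hB
  have hfix_eq : ∀ f : Fin n → Fin n,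
      fixSet f = Finset.univ.filter (fun v => f v = v) := fun f => rfl
  -- forward map A → B
  have Φdef : ∀ a : A, ((∀ v, ∃ m, (fwd a.1)^[m + 1] v = (fwd a.1)^[m] v) ∧
      (Finset.univ.filter (fun v => fwd a.1 v = v)).card = 1 ∧
      Nat.card {v : Fin n // InMD (fwd a.1) v} = k ∧
      (∀ u v, InMD (fwd a.1) u → InMD (fwd a.1) v →
        fwd a.1 u ≠ u → fwd a.1 v ≠ v → fwd a.1 u = fwd a.1 v → u = v)) := by
    rintro ⟨f, hac, hcard, hmin⟩
    have hne : (fixSet f).Nonempty := by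
      rw [← Finset.card_pos, hfix_eq, hcard]; omega
    refine ⟨fwd_reaches hac, fwd_fix_card hne, ?_, ?_⟩
    · rw [Nat.card_congr (Equiv.subtypeEquivRight
        (fun v => inMD_fwd_iff hac hmin)), Nat.card_eq_finsetCard, hfix_eq, hcard]
    · intro u v hu hv hnu hnv he
      exact fwd_chain ((inMD_fwd_iff hac hmin).mp hu) ((inMD_fwd_iff hac hmin).mp hv)
        hnu hnv he
  set Φ : A → B := fun a => ⟨fwd a.1, Φdef a⟩ with hΦ
  -- backward map B → A
  have Ψdef : ∀ b : B, ((∀ v, ∃ m, (bwd b.1)^[m + 1] v = (bwd b.1)^[m] v) ∧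
      (Finset.univ.filter (fun v => bwd b.1 v = v)).card = k ∧
      (∀ v, bwd b.1 v ≠ v → bwd b.1 (bwd b.1 v) = bwd b.1 v → bwd b.1 v < v)) := by
    rintro ⟨g, hac, hone, hcard, hchain⟩
    refine ⟨bwd_reaches hac, ?_, bwd_min hone⟩
    have : Finset.univ.filter (fun v => bwd g v = v)
        = Finset.univ.filter (fun v => InMD g v) := by
      ext v; simp [bwd_fixed_iff]
    rw [this, ← hcard, ← Nat.card_eq_finsetCard]
    exact (Nat.card_congr (Equiv.subtypeEquivRight (fun v => by simp))).symm
  set Ψ : B → A := fun b => ⟨bwd b.1, Ψdef b⟩ with hΨ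
  have hΦinj : Function.Injective Φ := by
    rintro ⟨f₁, hac₁, hc₁, hm₁⟩ ⟨f₂, hac₂, hc₂, hm₂⟩ h
    have : fwd f₁ = fwd f₂ := congrArg Subtype.val h
    exact Subtype.ext (fwd_injective hac₁ hm₁ hac₂ hm₂ this)
  have hΨinj : Function.Injective Ψ := by
    rintro ⟨g₁, hac₁, ho₁, hc₁, hch₁⟩ ⟨g₂, hac₂, ho₂, hc₂, hch₂⟩ h
    have : bwd g₁ = bwd g₂ := congrArg Subtype.val h
    exact Subtype.ext (bwd_injective hac₁ ho₁ hch₁ hac₂ ho₂ hch₂ this)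
  have hcard : Nat.card A = Nat.card B :=
    le_antisymm (Nat.card_le_card_of_injective Φ hΦinj)
      (Nat.card_le_card_of_injective Ψ hΨinj)
  exact Finite.card_eq.mp hcard
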